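/- Let N = 2 and β, β′ ∈ ℝ, and let L* be the two-bath adjoint Lindblad generator (baths coupled at sites 1 and 2). Define the 4×4 matrix ρ^{β,β′} := ((ρ_β+ρ_{β′})/2) ⊗ ((ρ_β+ρ_{β′})/2) − (1/8)(β₀−β₀′)² σz⊗σz + ((β₀−β₀′)/4)(n₊⊗n₋ − n₋⊗n₊) + i((β₀−β₀′)/4)(σ₊⊗σ₋ − σ₋⊗σ₊). Then ρ^{β,β′} is a density matrix (Hermitian, positive semidefinite, trace 1) and L*(ρ^{β,β′}) = 0. -/

import Mathlib

open Matrix Complex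
open scoped Kronecker ComplexOrder

noncomputable section

def sx : Matrix (Fin 2) (Fin 2) ℂ := !![0, 1; 1, 0]
def sy : Matrix (Fin 2) (Fin 2) ℂ := !![0, -Complex.I; Complex.I, 0]
def sz : Matrix (Fin 2) (Fin 2) ℂ := !![1, 0; 0, -1]
def sp : Matrix (Fin 2) (Fin 2) ℂ := !![0, 1; 0, 0]
def sm : Matrix (Fin 2) (Fin 2) ℂ := !![0, 0; 1, 0]
def np : Matrix (Fin 2) (Fin 2) ℂ := !![1, 0; 0, 0]
def nm : Matrix (Fin 2) (Fin 2) ℂ := !![0, 0; 0, 1]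

/-- `β₀ = e^{-β}/(e^{-β}+e^{β})`. -/
def b0 (β : ℝ) : ℝ := Real.exp (-β) / (Real.exp (-β) + Real.exp β)

/-- `β₁ = e^{β}/(e^{-β}+e^{β})`. -/
def b1 (β : ℝ) : ℝ := Real.exp β / (Real.exp (-β) + Real.exp β)

/-- The single-spin Gibbs state `ρ_β = diag(β₀, β₁)`. -/
def rhoB (β : ℝ) : Matrix (Fin 2) (Fin 2) ℂ := !![(b0 β : ℂ), 0; 0, (b1 β : ℂ)]

/-- The `N = 2` chain Hamiltonian `H_S = σz⊗I + I⊗σz + σx⊗σx + σy⊗σy`. -/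
def HS2 : Matrix (Fin 2 × Fin 2) (Fin 2 × Fin 2) ℂ :=
  sz ⊗ₖ (1 : Matrix (Fin 2) (Fin 2) ℂ) + (1 : Matrix (Fin 2) (Fin 2) ℂ) ⊗ₖ sz +
    sx ⊗ₖ sx + sy ⊗ₖ sy

/-- The two-bath adjoint Lindblad generator for `N = 2` (baths at sites 1 and 2). -/
def L2star (β β' : ℝ) (ρ : Matrix (Fin 2 × Fin 2) (Fin 2 × Fin 2) ℂ) :
    Matrix (Fin 2 × Fin 2) (Fin 2 × Fin 2) ℂ :=
  (-Complex.I) • (HS2 * ρ - ρ * HS2) +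
    (2 * b0 β : ℂ) • (2 • ((sp ⊗ₖ (1 : Matrix (Fin 2) (Fin 2) ℂ)) * ρ *
        (sm ⊗ₖ (1 : Matrix (Fin 2) (Fin 2) ℂ))) -
      ((nm ⊗ₖ (1 : Matrix (Fin 2) (Fin 2) ℂ)) * ρ + ρ * (nm ⊗ₖ (1 : Matrix (Fin 2) (Fin 2) ℂ)))) +
    (2 * b1 β : ℂ) • (2 • ((sm ⊗ₖ (1 : Matrix (Fin 2) (Fin 2) ℂ)) * ρ *
        (sp ⊗ₖ (1 : Matrix (Fin 2) (Fin 2) ℂ))) -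
      ((np ⊗ₖ (1 : Matrix (Fin 2) (Fin 2) ℂ)) * ρ + ρ * (np ⊗ₖ (1 : Matrix (Fin 2) (Fin 2) ℂ)))) +
    (2 * b0 β' : ℂ) • (2 • (((1 : Matrix (Fin 2) (Fin 2) ℂ) ⊗ₖ sp) * ρ *
        ((1 : Matrix (Fin 2) (Fin 2) ℂ) ⊗ₖ sm)) -
      (((1 : Matrix (Fin 2) (Fin 2) ℂ) ⊗ₖ nm) * ρ + ρ * ((1 : Matrix (Fin 2) (Fin 2) ℂ) ⊗ₖ nm))) +
    (2 * b1 β' : ℂ) • (2 • (((1 : Matrix (Fin 2) (Fin 2) ℂ) ⊗ₖ sm) * ρ *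
        ((1 : Matrix (Fin 2) (Fin 2) ℂ) ⊗ₖ sp)) -
      (((1 : Matrix (Fin 2) (Fin 2) ℂ) ⊗ₖ np) * ρ + ρ * ((1 : Matrix (Fin 2) (Fin 2) ℂ) ⊗ₖ np)))

/-- The explicit stationary state for `N = 2` baths at inverse temperatures `β, β'`. -/
def rbb (β β' : ℝ) : Matrix (Fin 2 × Fin 2) (Fin 2 × Fin 2) ℂ :=
  (((1 : ℂ) / 2) • (rhoB β + rhoB β')) ⊗ₖ (((1 : ℂ) / 2) • (rhoB β + rhoB β')) -
    (((b0 β - b0 β') ^ 2 / 8 : ℝ) : ℂ) • (sz ⊗ₖ sz) +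
    (((b0 β - b0 β') / 4 : ℝ) : ℂ) • (np ⊗ₖ nm - nm ⊗ₖ np) +
    (Complex.I * (((b0 β - b0 β') / 4 : ℝ) : ℂ)) • (sp ⊗ₖ sm - sm ⊗ₖ sp)


lemma b0_add_b1 (β : ℝ) : b0 β + b1 β = 1 := by
  have h : Real.exp (-β) + Real.exp β ≠ 0 := by positivity
  rw [b0, b1, ← add_div, div_self h]

lemma b1_eq (β : ℝ) : b1 β = 1 - b0 β := by linarith [b0_add_b1 β]

lemma b0_pos (β : ℝ) : 0 < b0 β := by
  have : (0:ℝ) < Real.exp (-β) + Real.exp β := by positivity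
  exact div_pos (Real.exp_pos _) this

lemma b0_lt_one (β : ℝ) : b0 β < 1 := by
  have h : (0:ℝ) < Real.exp (-β) + Real.exp β := by positivity
  rw [b0, div_lt_one h]
  linarith [Real.exp_pos β]

/-- Explicit entrywise form of `rbb` with `x = b0 β`, `y = b0 β'`. -/
def Rm (x y : ℝ) : Matrix (Fin 2 × Fin 2) (Fin 2 × Fin 2) ℂ :=
  Matrix.of fun p q =>
    (!![!![((((x+y)/2)^2 - (x-y)^2/8 : ℝ) : ℂ), 0;
          0, ((((x+y)/2)*((2-x-y)/2) + (x-y)^2/8 + (x-y)/4 : ℝ) : ℂ)],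
        !![0, 0; Complex.I*(((x-y)/4 : ℝ) : ℂ), 0];
        !![0, -(Complex.I*(((x-y)/4 : ℝ) : ℂ)); 0, 0],
        !![((((x+y)/2)*((2-x-y)/2) + (x-y)^2/8 - (x-y)/4 : ℝ) : ℂ), 0;
          0, ((((2-x-y)/2)^2 - (x-y)^2/8 : ℝ) : ℂ)]] p.1 q.1) p.2 q.2


lemma rbb_eq (β β' : ℝ) : rbb β β' = Rm (b0 β) (b0 β') := by
  ext ⟨i,k⟩ ⟨j,l⟩
  fin_cases i <;> fin_cases k <;> fin_cases j <;> fin_cases l <;>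
    simp [rbb, rhoB, b1_eq, sx, sy, sz, sp, sm, np, nm, Rm,
      Matrix.kroneckerMap_apply] <;> ring_nf

lemma Rm_herm (x y : ℝ) : (Rm x y).IsHermitian := by
  have : (Rm x y)ᴴ = Rm x y := by
    ext ⟨i,k⟩ ⟨j,l⟩
    fin_cases i <;> fin_cases k <;> fin_cases j <;> fin_cases l <;>
      simp [Matrix.conjTranspose_apply, Rm, Complex.ext_iff] <;> ring
  exact this

lemma Rm_trace (x y : ℝ) : (Rm x y).trace = 1 := by
  simp [Matrix.trace, Matrix.diag, Fintype.sum_prod_type, Fin.sum_univ_two, Rm]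
  push_cast
  ring

lemma lem1 (d c S G : ℝ) (hd : 0 ≤ d) (hS : 0 ≤ S) (h1 : 2*c^2 ≤ d^2) (h2 : G^2 ≤ 2*S^2) :
    0 ≤ d*S + c*G := by
  nlinarith [mul_nonneg hd hS, sq_nonneg (d*S + c*G),
    mul_nonneg (sq_nonneg c) (sub_nonneg.2 h2),
    mul_nonneg (sub_nonneg.2 h1) (sq_nonneg S)]

lemma lem2 (r1 i1 r2 i2 : ℝ) :
    (r1^2+i1^2 - (r2^2+i2^2) - 2*(r1*i2 - i1*r2))^2 ≤ 2*((r1^2+i1^2) + (r2^2+i2^2))^2 := by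
  nlinarith [sq_nonneg (r1*r2 + i1*i2), sq_nonneg (r1^2+i1^2 - (r2^2+i2^2) + 2*(r1*i2 - i1*r2)),
    sq_nonneg (r1*i2 - i1*r2), sq_nonneg (r1^2+i1^2 - r2^2 - i2^2)]

lemma lem3 (x y : ℝ) (hx : 0 < x) (hx1 : x < 1) (hy : 0 < y) (hy1 : y < 1) :
    2*((x-y)/4)^2 ≤ (((x+y)/2)*((2-x-y)/2) + (x-y)^2/8)^2 := by
  nlinarith [mul_pos hx hy, mul_pos (sub_pos.2 hx1) (sub_pos.2 hy1),
    mul_pos hx (sub_pos.2 hy1), mul_pos (sub_pos.2 hx1) hy,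
    sq_nonneg (x-y), sq_nonneg (x+y-1), sq_nonneg (x*y - (1-x)*(1-y)),
    mul_pos (mul_pos hx hy) (mul_pos (sub_pos.2 hx1) (sub_pos.2 hy1))]

lemma key (x y r0 i0 r1 i1 r2 i2 r3 i3 : ℝ)
    (hx : 0 < x) (hx1 : x < 1) (hy : 0 < y) (hy1 : y < 1) :
    0 ≤ (((x+y)/2)^2 - (x-y)^2/8) * (r0^2+i0^2)
      + (((x+y)/2)*((2-x-y)/2) + (x-y)^2/8 + (x-y)/4) * (r1^2+i1^2)
      + (((x+y)/2)*((2-x-y)/2) + (x-y)^2/8 - (x-y)/4) * (r2^2+i2^2)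
      + (((2-x-y)/2)^2 - (x-y)^2/8) * (r3^2+i3^2)
      - 2*((x-y)/4)*(r1*i2 - i1*r2) := by
  have hA : 0 ≤ ((x+y)/2)^2 - (x-y)^2/8 := by nlinarith [mul_pos hx hy]
  have hD : 0 ≤ ((2-x-y)/2)^2 - (x-y)^2/8 := by
    nlinarith [mul_pos (sub_pos.2 hx1) (sub_pos.2 hy1)]
  have hd : 0 ≤ ((x+y)/2)*((2-x-y)/2) + (x-y)^2/8 := by
    nlinarith [mul_pos (add_pos hx hy) (by nlinarith : (0:ℝ) < (2-x-y)), sq_nonneg (x-y)]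
  have hSS : (0:ℝ) ≤ (r1^2+i1^2) + (r2^2+i2^2) := by positivity
  have hQ := lem1 (((x+y)/2)*((2-x-y)/2) + (x-y)^2/8) ((x-y)/4)
    ((r1^2+i1^2) + (r2^2+i2^2)) ((r1^2+i1^2) - (r2^2+i2^2) - 2*(r1*i2 - i1*r2))
    hd hSS (lem3 x y hx hx1 hy hy1) (lem2 r1 i1 r2 i2)
  have h0 : (0:ℝ) ≤ r0^2+i0^2 := by positivity
  have h3 : (0:ℝ) ≤ r3^2+i3^2 := by positivity
  nlinarith [hQ, mul_nonneg hA h0, mul_nonneg hD h3]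

theorem Rm_psd (x y : ℝ) (hx : 0 < x) (hx1 : x < 1) (hy : 0 < y) (hy1 : y < 1)
    (hherm : (Rm x y).IsHermitian) : (Rm x y).PosSemidef := by
  refine posSemidef_iff_dotProduct_mulVec.2 ⟨hherm, fun v => ?_⟩
  simp only [dotProduct, Matrix.mulVec, Fintype.sum_prod_type, Fin.sum_univ_two, Rm,
    Matrix.of_apply, Matrix.cons_val', Matrix.cons_val_zero, Matrix.cons_val_one,
    Matrix.head_cons, Matrix.head_fin_const, Matrix.empty_val', Matrix.cons_val_fin_one,
    Pi.star_apply, Complex.star_def]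
  rw [Complex.le_def]
  constructor
  · simp only [Complex.add_re, Complex.mul_re, Complex.mul_im, Complex.sub_re, Complex.sub_im,
      Complex.add_im, Complex.ofReal_re, Complex.ofReal_im, Complex.I_re, Complex.I_im,
      Complex.zero_re, Complex.zero_im, Complex.neg_re, Complex.neg_im,
      Complex.conj_re, Complex.conj_im, Complex.one_re, Complex.one_im]
    nlinarith [key x y (v (0,0)).re (v (0,0)).im (v (0,1)).re (v (0,1)).im
      (v (1,0)).re (v (1,0)).im (v (1,1)).re (v (1,1)).im hx hx1 hy hy1]
  · simp only [Complex.add_re, Complex.mul_re, Complex.mul_im, Complex.sub_re, Complex.sub_im,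
      Complex.add_im, Complex.ofReal_re, Complex.ofReal_im, Complex.I_re, Complex.I_im,
      Complex.zero_re, Complex.zero_im, Complex.neg_re, Complex.neg_im,
      Complex.conj_re, Complex.conj_im, Complex.one_re, Complex.one_im]
    ring

set_option maxHeartbeats 2000000 in
lemma L2star_rbb (β β' : ℝ) : L2star β β' (rbb β β') = 0 := by
  rw [rbb_eq]
  ext ⟨i,k⟩ ⟨j,l⟩
  fin_cases i <;> fin_cases k <;> fin_cases j <;> fin_cases l <;>
    simp [L2star, HS2, b1_eq, sx, sy, sz, sp, sm, np, nm, Rm, two_smul,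
      Matrix.mul_apply, Fintype.sum_prod_type, Fin.sum_univ_two,
      Matrix.kroneckerMap_apply, Matrix.one_apply] <;> ring_nf <;>
    simp [Complex.I_sq] <;> ring_nf

/-- For `N = 2`, the explicit matrix `ρ^{β,β'}` is a density matrix and is stationary
for the two-bath adjoint Lindblad generator. -/
theorem rbb_is_stationary_density (β β' : ℝ) :
    (rbb β β').IsHermitian ∧ (rbb β β').PosSemidef ∧ (rbb β β').trace = 1 ∧
      L2star β β' (rbb β β') = 0 := by
  rw [rbb_eq]
  refine ⟨Rm_herm _ _, Rm_psd _ _ (b0_pos β) (b0_lt_one β) (b0_pos β') (b0_lt_one β')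
    (Rm_herm _ _), Rm_trace _ _, ?_⟩
  rw [← rbb_eq]
  exact L2star_rbb β β'
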